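/- Let q be a prime and G a commutative group written multiplicatively in which every element x satisfies x^q = 1. Let ℓ′ be a positive integer, y ∈ G, g : Fin ℓ′ → G, challenges c, c′ ∈ ZMod q with c ≠ c′, and responses z, z′ : Fin ℓ′ → ZMod q. If y^c · ∏_j (g j)^{z j} = y^{c′} · ∏_j (g j)^{z′ j}, then y = ∏_j (g j)^{(z′ j − z j)·(c − c′)⁻¹}. (Special soundness: two accepting Σ-protocol transcripts with distinct challenges determine a representation of y in the bases g_j.) -/
import Mathlib

private lemma pow_val_congr {q : ℕ} [NeZero q] {G : Type*} [Group G] {x : G}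
    (hx : x ^ q = 1) {m n : ℕ} (h : (m : ZMod q) = (n : ZMod q)) : x ^ m = x ^ n := by
  rw [pow_eq_pow_iff_modEq]
  exact ((ZMod.natCast_eq_natCast_iff m n q).mp h).of_dvd (orderOf_dvd_of_pow_eq_one hx)

private lemma zp_add {q : ℕ} [NeZero q] {G : Type*} [Group G] {x : G}
    (hx : x ^ q = 1) (a b : ZMod q) :
    x ^ (a + b).val = x ^ a.val * x ^ b.val := by
  rw [← pow_add]
  apply pow_val_congr hx
  push_cast [ZMod.natCast_val, ZMod.cast_id]
  ring

private lemma zp_mul {q : ℕ} [NeZero q] {G : Type*} [Group G] {x : G}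
    (hx : x ^ q = 1) (a b : ZMod q) :
    x ^ (a * b).val = (x ^ a.val) ^ b.val := by
  rw [← pow_mul]
  apply pow_val_congr hx
  push_cast [ZMod.natCast_val, ZMod.cast_id]
  ring

/-- Special soundness of the Σ-protocol: two accepting transcripts with
distinct challenges determine a representation of `y` in the bases `g j`. -/
theorem sigma_protocol_special_soundness
    {q : ℕ} (hq : q.Prime)
    {G : Type*} [CommGroup G] (hG : ∀ x : G, x ^ q = 1)
    (ℓ' : ℕ) (hℓ' : 0 < ℓ')
    (y : G) (g : Fin ℓ' → G)
    (c c' : ZMod q) (hcc : c ≠ c')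
    (z z' : Fin ℓ' → ZMod q)
    (hacc : y ^ c.val * ∏ j : Fin ℓ', (g j) ^ (z j).val =
            y ^ c'.val * ∏ j : Fin ℓ', (g j) ^ (z' j).val) :
    y = ∏ j : Fin ℓ', (g j) ^ (((z' j - z j) * (c - c')⁻¹).val) := by
  haveI : Fact q.Prime := ⟨hq⟩
  haveI : NeZero q := ⟨hq.pos.ne'⟩
  have hd : c - c' ≠ 0 := sub_ne_zero.mpr hcc
  have key : y ^ (c - c').val = ∏ j : Fin ℓ', (g j) ^ ((z' j - z j).val) := by
    have h1 := congrArg (fun w => w * (y ^ (-c').val * ∏ j : Fin ℓ', (g j) ^ ((- z j).val))) hacc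
    simp only [mul_assoc] at h1
    calc y ^ (c - c').val
        = y ^ c.val * y ^ (-c').val := by rw [← zp_add (hG y)]; ring_nf
      _ = (y ^ c.val * y ^ (-c').val) * ((∏ j : Fin ℓ', (g j) ^ ((z j).val)) *
            ∏ j : Fin ℓ', (g j) ^ ((- z j).val)) := by
          rw [← Finset.prod_mul_distrib]
          have : ∀ j : Fin ℓ', (g j) ^ ((z j).val) * (g j) ^ ((- z j).val) = 1 := by
            intro j
            rw [← zp_add (hG (g j))]
            simp [ZMod.val_zero]
          simp [this]
      _ = y ^ c.val * ((∏ j : Fin ℓ', (g j) ^ ((z j).val)) *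
            (y ^ (-c').val * ∏ j : Fin ℓ', (g j) ^ ((- z j).val))) := by
          simp only [mul_assoc, mul_left_comm, mul_comm]
      _ = y ^ c'.val * ((∏ j : Fin ℓ', (g j) ^ ((z' j).val)) *
            (y ^ (-c').val * ∏ j : Fin ℓ', (g j) ^ ((- z j).val))) := h1
      _ = (y ^ c'.val * y ^ (-c').val) * ((∏ j : Fin ℓ', (g j) ^ ((z' j).val)) *
            ∏ j : Fin ℓ', (g j) ^ ((- z j).val)) := by
          simp only [mul_assoc, mul_left_comm, mul_comm]
      _ = ∏ j : Fin ℓ', (g j) ^ ((z' j - z j).val) := by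
          rw [← zp_add (hG y), ← Finset.prod_mul_distrib]
          have h0 : (c' + -c' : ZMod q) = 0 := by ring
          have : ∀ j : Fin ℓ', (g j) ^ ((z' j).val) * (g j) ^ ((- z j).val)
              = (g j) ^ ((z' j - z j).val) := by
            intro j
            rw [← zp_add (hG (g j))]
            ring_nf
          simp [h0, ZMod.val_zero, this]
  have hone : ((c - c') * (c - c')⁻¹ : ZMod q) = 1 := mul_inv_cancel₀ hd
  calc y = y ^ ((1 : ZMod q)).val := by
        rw [ZMod.val_one_eq_one_mod, Nat.mod_eq_of_lt hq.one_lt, pow_one]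
    _ = y ^ (((c - c') * (c - c')⁻¹ : ZMod q)).val := by rw [hone]
    _ = (y ^ (c - c').val) ^ ((c - c')⁻¹).val := zp_mul (hG y) _ _
    _ = (∏ j : Fin ℓ', (g j) ^ ((z' j - z j).val)) ^ ((c - c')⁻¹).val := by rw [key]
    _ = ∏ j : Fin ℓ', (g j) ^ (((z' j - z j) * (c - c')⁻¹).val) := by
        rw [← Finset.prod_pow]
        exact Finset.prod_congr rfl fun j _ => (zp_mul (hG (g j)) _ _).symm
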